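/- If γ = a/q and γ'' = a''/q'' are consecutive elements of F_{Q,odd} (Farey fractions of order Q with odd denominators) with a''q − aq'' > 1, then there is exactly one fraction γ' = a'/q' in F_Q with γ < γ' < γ'' such that γ, γ', γ'' are consecutive in F_Q, and a''q − aq'' = ⌊(Q+q)/q'⌋. -/

import Mathlib

/-- `(a, q)` represents an element of the Farey sequence `F_Q`. -/
def IsFarey (Q a q : ℕ) : Prop :=
  1 ≤ a ∧ a ≤ q ∧ q ≤ Q ∧ Nat.gcd a q = 1

/-- `(a, q)` represents an element of `F_{Q,odd}`: a Farey fraction of order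
`Q` with odd denominator. -/
def IsFareyOdd (Q a q : ℕ) : Prop := IsFarey Q a q ∧ Odd q

/-- `a/q < a'/q'` are consecutive elements of `F_Q`. -/
def FareyConsecutive (Q a q a' q' : ℕ) : Prop :=
  IsFarey Q a q ∧ IsFarey Q a' q' ∧ (a : ℚ) / q < (a' : ℚ) / q' ∧
    ∀ b c : ℕ, IsFarey Q b c →
      ¬((a : ℚ) / q < (b : ℚ) / c ∧ (b : ℚ) / c < (a' : ℚ) / q')

/-- `a/q < a'/q'` are consecutive elements of `F_{Q,odd}`. -/
def FareyOddConsecutive (Q a q a' q' : ℕ) : Prop :=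
  IsFareyOdd Q a q ∧ IsFareyOdd Q a' q' ∧ (a : ℚ) / q < (a' : ℚ) / q' ∧
    ∀ b c : ℕ, IsFareyOdd Q b c →
      ¬((a : ℚ) / q < (b : ℚ) / c ∧ (b : ℚ) / c < (a' : ℚ) / q')

lemma farey_div_lt_div {b c b' c' : ℕ} (hc : 0 < c) (hc' : 0 < c') :
    (b : ℚ) / c < (b' : ℚ) / c' ↔ (b : ℤ) * c' < b' * c := by
  rw [div_lt_div_iff₀ (by exact_mod_cast hc) (by exact_mod_cast hc')]
  constructor
  · intro h; exact_mod_cast h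
  · intro h; exact_mod_cast h

lemma farey_val_inj {Q b c b' c' : ℕ} (h1 : IsFarey Q b c) (h2 : IsFarey Q b' c')
    (h : (b : ℚ) / c = (b' : ℚ) / c') : b = b' ∧ c = c' := by
  obtain ⟨hb1, hbc, hcQ, hg⟩ := h1
  obtain ⟨hb1', hbc', hcQ', hg'⟩ := h2
  have hc : 0 < c := lt_of_lt_of_le hb1 hbc
  have hc' : 0 < c' := lt_of_lt_of_le hb1' hbc'
  have key : b * c' = b' * c := by
    have := div_eq_div_iff (show (c:ℚ) ≠ 0 by positivity) (show (c':ℚ) ≠ 0 by positivity) |>.mp h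
    exact_mod_cast this
  have hcc' : c = c' := by
    have d1 : c ∣ c' := (Nat.Coprime.symm hg).dvd_of_dvd_mul_left ⟨b', by linarith [key]⟩
    have d2 : c' ∣ c := (Nat.Coprime.symm hg').dvd_of_dvd_mul_left ⟨b, by linarith [key]⟩
    exact Nat.dvd_antisymm d1 d2
  subst hcc'
  exact ⟨Nat.eq_of_mul_eq_mul_right hc key, rfl⟩

lemma rat_isFarey {Q : ℕ} {r : ℚ} (h0 : 0 < r) (h1 : r ≤ 1) (hd : r.den ≤ Q) :
    IsFarey Q r.num.natAbs r.den ∧ ((r.num.natAbs : ℚ) / (r.den : ℚ) = r) := by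
  have hnum : 0 < r.num := Rat.num_pos.mpr h0
  have hcast : (r.num.natAbs : ℤ) = r.num := Int.natAbs_of_nonneg hnum.le
  have hden : (0:ℤ) < r.den := by exact_mod_cast r.pos
  have hle : r.num ≤ r.den := by
    have := (Rat.le_iff _ _).mp h1
    simpa using this
  constructor
  · refine ⟨?_, ?_, hd, r.reduced⟩
    · omega
    · omega
  · have : ((r.num.natAbs : ℚ)) = ((r.num : ℚ)) := by
      rw [Nat.cast_natAbs]; exact_mod_cast abs_of_nonneg hnum.le
    rw [this]; exact Rat.num_div_den r


lemma farey_consecutive_denom_sum {Q a q a' q' : ℕ} (h : FareyConsecutive Q a q a' q') :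
    Q < q + q' := by
  by_contra hle
  push_neg at hle
  obtain ⟨⟨ha1, haq, hqQ, hg⟩, ⟨ha1', haq', hqQ', hg'⟩, hlt, hbtw⟩ := h
  have hq0 : 0 < q := le_trans ha1 haq
  have hq0' : 0 < q' := le_trans ha1' haq'
  have hcross : (a:ℤ) * q' < a' * q := (farey_div_lt_div hq0 hq0').mp hlt
  set r : ℚ := ((a:ℚ) + a') / ((q:ℚ) + q') with hr
  have hqq0 : (0:ℚ) < (q:ℚ) + q' := by positivity
  have hq0Q : (0:ℚ) < (q:ℚ) := by exact_mod_cast hq0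
  have hq0Q' : (0:ℚ) < (q':ℚ) := by exact_mod_cast hq0'
  have hcrossQ : (a:ℚ) * q' < (a':ℚ) * q := by exact_mod_cast hcross
  have hm1 : (a:ℚ)/q < r := by
    rw [hr, div_lt_div_iff₀ hq0Q hqq0]; nlinarith
  have hm2 : r < (a':ℚ)/q' := by
    rw [hr, div_lt_div_iff₀ hqq0 hq0Q']; nlinarith
  have hr0 : 0 < r := by
    have : (0:ℚ) ≤ (a:ℚ)/q := by positivity
    linarith
  have hr1 : r ≤ 1 := by
    rw [hr, div_le_one hqq0]
    have h1 : (a:ℚ) ≤ q := by exact_mod_cast haq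
    have h2 : (a':ℚ) ≤ q' := by exact_mod_cast haq'
    linarith
  have hden : r.den ≤ Q := by
    have hdvd : ((r.den : ℤ)) ∣ ((q:ℤ) + q') := by
      have h2 : r = (((a:ℤ) + a' : ℤ) : ℚ) / (((q:ℤ) + q' : ℤ) : ℚ) := by
        rw [hr]; push_cast; ring
      rw [h2, ← Rat.divInt_eq_div]
      exact Rat.den_dvd _ _
    have : (r.den : ℤ) ≤ (q:ℤ) + q' := Int.le_of_dvd (by exact_mod_cast Nat.add_pos_left hq0 q') hdvd
    have : r.den ≤ q + q' := by exact_mod_cast this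
    omega
  obtain ⟨hF, hval⟩ := rat_isFarey hr0 hr1 hden
  exact hbtw _ _ hF ⟨by rw [hval]; exact hm1, by rw [hval]; exact hm2⟩

lemma farey_consecutive_det {Q a q a' q' : ℕ} (h : FareyConsecutive Q a q a' q') :
    (a' : ℤ) * q - a * q' = 1 := by
  obtain ⟨⟨ha1, haq, hqQ, hg⟩, ⟨ha1', haq', hqQ', hg'⟩, hlt, hbtw⟩ := h
  have hq0 : 0 < q := le_trans ha1 haq
  have hq0' : 0 < q' := le_trans ha1' haq'
  have hcross : (a:ℤ) * q' < a' * q := (farey_div_lt_div hq0 hq0').mp hlt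
  have haltq : a < q := by
    rcases lt_or_eq_of_le haq with hx | hx
    · exact hx
    · exfalso; nlinarith [hcross, haq', hx]
  have hqz : ((q:ℤ)) ≠ 0 := by positivity
  have hqZ : (0:ℤ) < q := by exact_mod_cast hq0
  have hqQZ : (q:ℤ) ≤ Q := by exact_mod_cast hqQ
  have hcex : ∃ cI : ℤ, ((Q:ℤ) - q < cI ∧ cI ≤ Q) ∧ (q:ℤ) ∣ a * cI + 1 := by
    have hcop : IsCoprime (a:ℤ) (q:ℤ) := by
      rw [Int.isCoprime_iff_gcd_eq_one]; exact_mod_cast hg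
    obtain ⟨x, y, hxy⟩ := hcop
    have hu : (q:ℤ) ∣ a * (-x) + 1 := ⟨y, by linear_combination -hxy⟩
    refine ⟨(Q:ℤ) - ((Q:ℤ) - (-x)) % q, ?_, ?_⟩
    · have hmod0 : 0 ≤ ((Q:ℤ) - (-x)) % q := Int.emod_nonneg _ hqz
      have hmod1 : ((Q:ℤ) - (-x)) % q < q := Int.emod_lt_of_pos _ hqZ
      omega
    · have h1 : ((Q:ℤ) - ((Q:ℤ) - (-x)) % q) - (-x) = q * (((Q:ℤ) - (-x)) / q) := by
        have := Int.emod_def ((Q:ℤ) - (-x)) q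
        linarith [this]
      have h2 : (q:ℤ) ∣ a * (((Q:ℤ) - ((Q:ℤ) - (-x)) % q) - (-x)) :=
        ⟨a * (((Q:ℤ) - (-x)) / q), by rw [h1]; ring⟩
      have h3 : a * ((Q:ℤ) - ((Q:ℤ) - (-x)) % q) + 1
          = a * (((Q:ℤ) - ((Q:ℤ) - (-x)) % q) - (-x)) + (a * (-x) + 1) := by ring
      rw [h3]
      exact dvd_add h2 hu
  obtain ⟨cI, ⟨hcgt, hcQ⟩, hdvdc⟩ := hcex
  have hc1 : 1 ≤ cI := by omega
  obtain ⟨bI, hbq⟩ : ∃ bI : ℤ, bI * q = a * cI + 1 :=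
    ⟨(a * cI + 1) / q, Int.ediv_mul_cancel hdvdc⟩
  have haZ : (1:ℤ) ≤ a := by exact_mod_cast ha1
  have hb1 : 1 ≤ bI := by nlinarith
  have haltqZ : (a:ℤ) < q := by exact_mod_cast haltq
  have hbc : bI ≤ cI := by nlinarith
  obtain ⟨b, c, hbb, hcc⟩ : ∃ b c : ℕ, (b:ℤ) = bI ∧ (c:ℤ) = cI :=
    ⟨bI.toNat, cI.toNat, Int.toNat_of_nonneg (by omega), Int.toNat_of_nonneg (by omega)⟩
  have hdet : (b:ℤ) * q - a * c = 1 := by rw [hbb, hcc]; linarith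
  have hgbc : Nat.gcd b c = 1 := by
    have h4 : IsCoprime (b:ℤ) (c:ℤ) := ⟨q, -(a:ℤ), by linarith⟩
    rw [Int.isCoprime_iff_gcd_eq_one] at h4
    exact_mod_cast h4
  have hc0 : 0 < c := by omega
  have hFb : IsFarey Q b c := ⟨by omega, by omega, by omega, hgbc⟩
  have hbclt : (a:ℚ)/q < (b:ℚ)/c := (farey_div_lt_div hq0 hc0).mpr (by omega)
  have hge : (a':ℚ)/q' ≤ (b:ℚ)/c := by
    by_contra hlt2
    push_neg at hlt2
    exact hbtw b c hFb ⟨hbclt, hlt2⟩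
  have he : 0 ≤ (b:ℤ) * q' - a' * c := by
    rw [div_le_div_iff₀ (by exact_mod_cast hq0') (by exact_mod_cast hc0)] at hge
    have h5 : (a':ℤ) * c ≤ b * q' := by exact_mod_cast hge
    omega
  have hd1 : 1 ≤ (a':ℤ) * q - a * q' := by omega
  have hiden : (q':ℤ) = c * ((a':ℤ) * q - a * q') + q * ((b:ℤ) * q' - a' * c) := by
    have hh : (c:ℤ) * ((a':ℤ) * q - a * q') + q * ((b:ℤ) * q' - a' * c)
        = q' * ((b:ℤ) * q - a * c) := by ring
    rw [hh, hdet]; ring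
  have hq'Z : (q':ℤ) ≤ Q := by exact_mod_cast hqQ'
  have he0 : (b:ℤ) * q' - a' * c = 0 := by
    by_contra hne
    have he1 : 1 ≤ (b:ℤ) * q' - a' * c := by omega
    have hcpos : (0:ℤ) ≤ c := by positivity
    have t1 : (c:ℤ) ≤ c * ((a':ℤ) * q - a * q') := le_mul_of_one_le_right hcpos hd1
    have t2 : (q:ℤ) ≤ q * ((b:ℤ) * q' - a' * c) := le_mul_of_one_le_right (by positivity) he1
    omega
  have hq'cd : (q':ℤ) = c * ((a':ℤ) * q - a * q') := by linear_combination hiden + (q:ℤ) * he0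
  have hbq' : b * q' = a' * c := by
    have h7 : (b:ℤ) * q' = a' * c := by omega
    exact_mod_cast h7
  have hq'c : q' ∣ c := by
    have hdv : q' ∣ a' * c := ⟨b, by linarith [hbq']⟩
    exact (Nat.Coprime.symm hg').dvd_of_dvd_mul_left hdv
  have hq'lec : (q':ℤ) ≤ c := by
    have := Nat.le_of_dvd hc0 hq'c
    exact_mod_cast this
  have hq0'Z : (1:ℤ) ≤ q' := by exact_mod_cast hq0'
  have h8 : (a':ℤ) * q - a * q' ≤ 1 := by
    have hDpos : (0:ℤ) ≤ (a':ℤ) * q - a * q' := by omega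
    have t3 : (q':ℤ) * ((a':ℤ) * q - a * q') ≤ c * ((a':ℤ) * q - a * q') :=
      mul_le_mul_of_nonneg_right hq'lec hDpos
    exact le_of_mul_le_mul_left (by rw [mul_one]; linarith [t3, hq'cd])
      (show (0:ℤ) < q' by omega)
  omega


theorem fareyOdd_consecutive_delta (Q a q a'' q'' : ℕ)
    (h : FareyOddConsecutive Q a q a'' q'')
    (hΔ : 1 < (a'' : ℤ) * q - a * q'') :
    ∃! p : ℕ × ℕ,
      FareyConsecutive Q a q p.1 p.2 ∧ FareyConsecutive Q p.1 p.2 a'' q'' ∧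
        (a'' : ℤ) * q - a * q'' = ((Q + q) / p.2 : ℕ) := by
  classical
  obtain ⟨⟨hF, hqodd⟩, ⟨hF'', hq''odd⟩, hlt, hbtw⟩ := h
  set S : Finset (ℕ × ℕ) := (Finset.range (Q+1) ×ˢ Finset.range (Q+1)).filter
      (fun p => IsFarey Q p.1 p.2 ∧ (a:ℚ)/q < (p.1:ℚ)/p.2 ∧ (p.1:ℚ)/p.2 < (a'':ℚ)/q'')
    with hSdef
  have hmemS : ∀ p : ℕ × ℕ, p ∈ S ↔
      IsFarey Q p.1 p.2 ∧ (a:ℚ)/q < (p.1:ℚ)/p.2 ∧ (p.1:ℚ)/p.2 < (a'':ℚ)/q'' := by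
    intro p
    rw [hSdef, Finset.mem_filter, Finset.mem_product, Finset.mem_range, Finset.mem_range]
    constructor
    · exact fun hx => hx.2
    · intro hp
      obtain ⟨h1, h2, h3, _⟩ := hp.1
      exact ⟨⟨by omega, by omega⟩, hp⟩
  have hSeven : ∀ p ∈ S, Even p.2 := by
    intro p hp
    rw [hmemS] at hp
    by_contra hodd
    rw [Nat.not_even_iff_odd] at hodd
    exact hbtw p.1 p.2 ⟨hp.1, hodd⟩ ⟨hp.2.1, hp.2.2⟩
  have hns : S.Nonempty := by
    by_contra hempty
    have hcons : FareyConsecutive Q a q a'' q'' := by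
      refine ⟨hF, hF'', hlt, ?_⟩
      intro b c hFb hb
      exact hempty ⟨(b, c), (hmemS (b, c)).mpr ⟨hFb, hb.1, hb.2⟩⟩
    have := farey_consecutive_det hcons
    omega
  obtain ⟨x, hxS, hxmin⟩ := Finset.exists_min_image S (fun p => (p.1:ℚ)/p.2) hns
  have huniq : ∀ y ∈ S, y = x := by
    intro y hyS
    by_contra hne
    have hvne : (y.1:ℚ)/y.2 ≠ (x.1:ℚ)/x.2 := by
      intro heq
      obtain ⟨e1, e2⟩ := farey_val_inj ((hmemS y).mp hyS).1 ((hmemS x).mp hxS).1 heq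
      exact hne (Prod.ext e1 e2)
    have hvgt : (x.1:ℚ)/x.2 < (y.1:ℚ)/y.2 := lt_of_le_of_ne (hxmin y hyS) hvne.symm
    set T : Finset (ℕ × ℕ) := S.filter (fun p => (x.1:ℚ)/x.2 < (p.1:ℚ)/p.2) with hTdef
    have hyT : y ∈ T := Finset.mem_filter.mpr ⟨hyS, hvgt⟩
    obtain ⟨z, hzT, hzmin⟩ := Finset.exists_min_image T (fun p => (p.1:ℚ)/p.2) ⟨y, hyT⟩
    have hzS := (Finset.mem_filter.mp hzT).1
    have hzgt := (Finset.mem_filter.mp hzT).2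
    have hcons : FareyConsecutive Q x.1 x.2 z.1 z.2 := by
      refine ⟨((hmemS x).mp hxS).1, ((hmemS z).mp hzS).1, hzgt, ?_⟩
      intro b c hFb hb
      have hbS : (b, c) ∈ S := (hmemS (b, c)).mpr
        ⟨hFb, lt_trans ((hmemS x).mp hxS).2.1 hb.1, lt_trans hb.2 ((hmemS z).mp hzS).2.2⟩
      have hbT : (b, c) ∈ T := Finset.mem_filter.mpr ⟨hbS, hb.1⟩
      exact absurd hb.2 (not_lt.mpr (hzmin _ hbT))
    have hdet := farey_consecutive_det hcons
    obtain ⟨m, hm⟩ := hSeven x hxS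
    obtain ⟨n, hn⟩ := hSeven z hzS
    have hx2 : (x.2:ℤ) = 2 * m := by rw [hm]; push_cast; ring
    have hz2 : (z.2:ℤ) = 2 * n := by rw [hn]; push_cast; ring
    have hpar : (1:ℤ) = 2 * ((z.1:ℤ) * m - x.1 * n) := by
      linear_combination -hdet + (z.1:ℤ) * hx2 - (x.1:ℤ) * hz2
    omega
  obtain ⟨hFx, hxlt1, hxlt2⟩ := (hmemS x).mp hxS
  have hconsL : FareyConsecutive Q a q x.1 x.2 := by
    refine ⟨hF, hFx, hxlt1, ?_⟩
    intro b c hFb hb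
    have hbS : (b, c) ∈ S := (hmemS (b, c)).mpr ⟨hFb, hb.1, lt_trans hb.2 hxlt2⟩
    have heq := huniq _ hbS
    rw [← heq] at hb
    exact lt_irrefl _ hb.2
  have hconsR : FareyConsecutive Q x.1 x.2 a'' q'' := by
    refine ⟨hFx, hF'', hxlt2, ?_⟩
    intro b c hFb hb
    have hbS : (b, c) ∈ S := (hmemS (b, c)).mpr ⟨hFb, lt_trans hxlt1 hb.1, hb.2⟩
    have heq := huniq _ hbS
    rw [← heq] at hb
    exact lt_irrefl _ hb.1
  have hd1 := farey_consecutive_det hconsL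
  have hd2 := farey_consecutive_det hconsR
  have hQlt := farey_consecutive_denom_sum hconsR
  have hx20 : 0 < x.2 := lt_of_lt_of_le hFx.1 hFx.2.1
  have hsum : (q:ℤ) + q'' = ((a'':ℤ) * q - a * q'') * x.2 := by
    linear_combination -(q:ℤ) * hd2 - (q'':ℤ) * hd1
  obtain ⟨Dn, hDn⟩ : ∃ Dn : ℕ, (Dn:ℤ) = (a'':ℤ) * q - a * q'' :=
    ⟨((a'':ℤ) * q - a * q'').toNat, Int.toNat_of_nonneg (by omega)⟩
  have hMZ : ((x.2 * Dn : ℕ) : ℤ) = (q:ℤ) + q'' := by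
    push_cast
    rw [hDn, hsum]
    ring
  have hM : x.2 * Dn = q + q'' := by exact_mod_cast hMZ
  have hq''Q : q'' ≤ Q := hF''.2.2.1
  have hnat : Q + q = x.2 * Dn + (Q - q'') := by omega
  have hdiv : (Q + q) / x.2 = Dn := by
    rw [hnat, Nat.mul_add_div hx20, Nat.div_eq_of_lt (by omega)]
    omega
  refine ⟨x, ⟨hconsL, hconsR, by rw [hdiv, hDn]⟩, ?_⟩
  rintro p ⟨hpL, hpR, -⟩
  exact huniq p ((hmemS p).mpr ⟨hpL.2.1, hpL.2.2.1, hpR.2.2.1⟩)
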